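/- For the 7-dimensional Lie algebra above, the closed 1-form α1 satisfies i_{X7}α1 = 0 and (dα7)^3 ∧ α1 = 0, and its class in H^1(g) is non-zero, while the class of α7∧(dα7)^2∧α1 in H^6(g) is zero. Hence the Lefschetz relation R_{Lef_1} for (g, α7) is not the graph of an injective map. -/

import Mathlib

set_option maxHeartbeats 2000000
set_option synthInstance.maxHeartbeats 400000

/-- The bracket of the 7-dimensional nilpotent Lie algebra:
`[X1,X2]=X3, [X1,X3]=X4, [X1,X4]=X7, [X2,X3]=X7, [X5,X6]=X7`. -/
def bracket7 (x y : Fin 7 → ℝ) : Fin 7 → ℝ :=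
  ![0, 0, x 0 * y 1 - x 1 * y 0, x 0 * y 2 - x 2 * y 0, 0, 0,
    (x 0 * y 3 - x 3 * y 0) + (x 1 * y 2 - x 2 * y 1) + (x 4 * y 5 - x 5 * y 4)]

/-- The dual basis 1-forms `α1,…,α7`, viewed in the exterior algebra `Λ g*`. -/
noncomputable def a7 (i : Fin 7) : ExteriorAlgebra ℝ (Module.Dual ℝ (Fin 7 → ℝ)) :=
  ExteriorAlgebra.ι ℝ (LinearMap.proj i)

/-- `dα7 = -α1∧α4 - α2∧α3 - α5∧α6`. -/
noncomputable def da7 : ExteriorAlgebra ℝ (Module.Dual ℝ (Fin 7 → ℝ)) :=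
  -(a7 0 * a7 3) - a7 1 * a7 2 - a7 4 * a7 5

/-- The Chevalley-Eilenberg differential of an arbitrary 1-form `β = Σ cᵢ αᵢ`, expressed in
the exterior algebra: `dβ = c₃ dα3 + c₄ dα4 + c₇ dα7` (since `dα1 = dα2 = dα5 = dα6 = 0`). -/
noncomputable def D1 (β : Module.Dual ℝ (Fin 7 → ℝ)) :
    ExteriorAlgebra ℝ (Module.Dual ℝ (Fin 7 → ℝ)) :=
  β ![0, 0, 1, 0, 0, 0, 0] • (-(a7 0 * a7 1)) + β ![0, 0, 0, 1, 0, 0, 0] • (-(a7 0 * a7 2)) +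
    β ![0, 0, 0, 0, 0, 0, 1] • da7

/-- The set of differentials of decomposable 5-cochains (whose span is the space of exact
6-cochains), via the derivation rule. -/
noncomputable def exact6 : Set (ExteriorAlgebra ℝ (Module.Dual ℝ (Fin 7 → ℝ))) :=
  {x | ∃ b1 b2 b3 b4 b5 : Module.Dual ℝ (Fin 7 → ℝ),
    x = D1 b1 * ExteriorAlgebra.ι ℝ b2 * ExteriorAlgebra.ι ℝ b3 * ExteriorAlgebra.ι ℝ b4 *
          ExteriorAlgebra.ι ℝ b5
      - ExteriorAlgebra.ι ℝ b1 * D1 b2 * ExteriorAlgebra.ι ℝ b3 * ExteriorAlgebra.ι ℝ b4 *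
          ExteriorAlgebra.ι ℝ b5
      + ExteriorAlgebra.ι ℝ b1 * ExteriorAlgebra.ι ℝ b2 * D1 b3 * ExteriorAlgebra.ι ℝ b4 *
          ExteriorAlgebra.ι ℝ b5
      - ExteriorAlgebra.ι ℝ b1 * ExteriorAlgebra.ι ℝ b2 * ExteriorAlgebra.ι ℝ b3 * D1 b4 *
          ExteriorAlgebra.ι ℝ b5
      + ExteriorAlgebra.ι ℝ b1 * ExteriorAlgebra.ι ℝ b2 * ExteriorAlgebra.ι ℝ b3 *
          ExteriorAlgebra.ι ℝ b4 * D1 b5}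

lemma a7_sq (i : Fin 7) : a7 i * a7 i = 0 := ExteriorAlgebra.ι_sq_zero _
lemma a7_sq' (i : Fin 7) (x) : a7 i * (a7 i * x) = 0 := by
  rw [← mul_assoc, a7_sq, zero_mul]
lemma a7_swap (i j : Fin 7) (_h : j < i) : a7 i * a7 j = -(a7 j * a7 i) :=
  eq_neg_of_add_eq_zero_left (ExteriorAlgebra.ι_add_mul_swap _ _)
lemma a7_swap' (i j : Fin 7) (_h : j < i) (x) : a7 i * (a7 j * x) = -(a7 j * (a7 i * x)) := by
  rw [← mul_assoc, a7_swap i j _h, neg_mul, mul_assoc]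

lemma key : a7 6 * da7 * da7 * a7 0 =
    (-2 : ℝ) • (D1 (LinearMap.proj (3 : Fin 7) : Module.Dual ℝ (Fin 7 → ℝ)) *
          ExteriorAlgebra.ι ℝ (LinearMap.proj (1 : Fin 7) : Module.Dual ℝ (Fin 7 → ℝ)) *
          ExteriorAlgebra.ι ℝ (LinearMap.proj (4 : Fin 7) : Module.Dual ℝ (Fin 7 → ℝ)) *
          ExteriorAlgebra.ι ℝ (LinearMap.proj (5 : Fin 7) : Module.Dual ℝ (Fin 7 → ℝ)) *
          ExteriorAlgebra.ι ℝ (LinearMap.proj (6 : Fin 7) : Module.Dual ℝ (Fin 7 → ℝ))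
      - ExteriorAlgebra.ι ℝ (LinearMap.proj (3 : Fin 7) : Module.Dual ℝ (Fin 7 → ℝ)) *
          D1 (LinearMap.proj (1 : Fin 7) : Module.Dual ℝ (Fin 7 → ℝ)) *
          ExteriorAlgebra.ι ℝ (LinearMap.proj (4 : Fin 7) : Module.Dual ℝ (Fin 7 → ℝ)) *
          ExteriorAlgebra.ι ℝ (LinearMap.proj (5 : Fin 7) : Module.Dual ℝ (Fin 7 → ℝ)) *
          ExteriorAlgebra.ι ℝ (LinearMap.proj (6 : Fin 7) : Module.Dual ℝ (Fin 7 → ℝ))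
      + ExteriorAlgebra.ι ℝ (LinearMap.proj (3 : Fin 7) : Module.Dual ℝ (Fin 7 → ℝ)) *
          ExteriorAlgebra.ι ℝ (LinearMap.proj (1 : Fin 7) : Module.Dual ℝ (Fin 7 → ℝ)) *
          D1 (LinearMap.proj (4 : Fin 7) : Module.Dual ℝ (Fin 7 → ℝ)) *
          ExteriorAlgebra.ι ℝ (LinearMap.proj (5 : Fin 7) : Module.Dual ℝ (Fin 7 → ℝ)) *
          ExteriorAlgebra.ι ℝ (LinearMap.proj (6 : Fin 7) : Module.Dual ℝ (Fin 7 → ℝ))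
      - ExteriorAlgebra.ι ℝ (LinearMap.proj (3 : Fin 7) : Module.Dual ℝ (Fin 7 → ℝ)) *
          ExteriorAlgebra.ι ℝ (LinearMap.proj (1 : Fin 7) : Module.Dual ℝ (Fin 7 → ℝ)) *
          ExteriorAlgebra.ι ℝ (LinearMap.proj (4 : Fin 7) : Module.Dual ℝ (Fin 7 → ℝ)) *
          D1 (LinearMap.proj (5 : Fin 7) : Module.Dual ℝ (Fin 7 → ℝ)) *
          ExteriorAlgebra.ι ℝ (LinearMap.proj (6 : Fin 7) : Module.Dual ℝ (Fin 7 → ℝ))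
      + ExteriorAlgebra.ι ℝ (LinearMap.proj (3 : Fin 7) : Module.Dual ℝ (Fin 7 → ℝ)) *
          ExteriorAlgebra.ι ℝ (LinearMap.proj (1 : Fin 7) : Module.Dual ℝ (Fin 7 → ℝ)) *
          ExteriorAlgebra.ι ℝ (LinearMap.proj (4 : Fin 7) : Module.Dual ℝ (Fin 7 → ℝ)) *
          ExteriorAlgebra.ι ℝ (LinearMap.proj (5 : Fin 7) : Module.Dual ℝ (Fin 7 → ℝ)) *
          D1 (LinearMap.proj (6 : Fin 7) : Module.Dual ℝ (Fin 7 → ℝ))) := by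
  have hι : ∀ i : Fin 7,
      ExteriorAlgebra.ι ℝ (LinearMap.proj (R := ℝ) (φ := fun _ : Fin 7 => ℝ) i) = a7 i :=
    fun _ => rfl
  simp only [hι, D1, LinearMap.proj_apply, Matrix.cons_val_zero, Matrix.cons_val_one,
    Matrix.head_cons, Matrix.cons_val_fin_one, Matrix.cons_val_succ,
    show ((![0,0,1,0,0,0,0] : Fin 7 → ℝ) 3) = 0 from rfl,
    show ((![0,0,0,1,0,0,0] : Fin 7 → ℝ) 3) = 1 from rfl,
    show ((![0,0,0,0,0,0,1] : Fin 7 → ℝ) 3) = 0 from rfl,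
    show ((![0,0,1,0,0,0,0] : Fin 7 → ℝ) 4) = 0 from rfl,
    show ((![0,0,0,1,0,0,0] : Fin 7 → ℝ) 4) = 0 from rfl,
    show ((![0,0,0,0,0,0,1] : Fin 7 → ℝ) 4) = 0 from rfl,
    show ((![0,0,1,0,0,0,0] : Fin 7 → ℝ) 5) = 0 from rfl,
    show ((![0,0,0,1,0,0,0] : Fin 7 → ℝ) 5) = 0 from rfl,
    show ((![0,0,0,0,0,0,1] : Fin 7 → ℝ) 5) = 0 from rfl,
    show ((![0,0,1,0,0,0,0] : Fin 7 → ℝ) 6) = 0 from rfl,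
    show ((![0,0,0,1,0,0,0] : Fin 7 → ℝ) 6) = 0 from rfl,
    show ((![0,0,0,0,0,0,1] : Fin 7 → ℝ) 6) = 1 from rfl]
  norm_num
  simp only [da7, sub_mul, mul_sub, neg_mul, mul_neg, add_mul, mul_add, mul_assoc,
    neg_neg, sub_eq_add_neg, neg_add, smul_add, smul_neg, smul_smul, smul_zero, zero_mul,
    mul_zero, one_smul, zero_smul]
  simp +decide only [a7_sq, a7_sq', a7_swap, a7_swap', mul_neg, neg_neg, mul_zero, neg_zero,
    add_zero, zero_add, smul_neg, smul_zero]
  module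

/-- The closed 1-form `α1` satisfies `i_{X7} α1 = 0` and `(dα7)³ ∧ α1 = 0`, its class in
`H¹(g)` is non-zero (`α1 ≠ 0`, there being no exact 1-cochains), while the class of
`α7 ∧ (dα7)² ∧ α1` in `H⁶(g)` is zero (it is exact). Hence the Lefschetz relation
`R_{Lef₁}` for `(g, α7)` is not the graph of an injective map. -/
theorem stmt17 :
    (∀ X Y, (LinearMap.proj 0 : Module.Dual ℝ (Fin 7 → ℝ)) (bracket7 X Y) = 0) ∧
    (LinearMap.proj 0 : Module.Dual ℝ (Fin 7 → ℝ)) ![0, 0, 0, 0, 0, 0, 1] = 0 ∧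
    da7 * da7 * da7 * a7 0 = 0 ∧
    (LinearMap.proj 0 : Module.Dual ℝ (Fin 7 → ℝ)) ≠ 0 ∧
    a7 6 * da7 * da7 * a7 0 ∈ Submodule.span ℝ exact6 := by
  refine ⟨fun X Y => rfl, rfl, ?_, ?_, ?_⟩
  · simp only [da7, sub_mul, mul_sub, neg_mul, mul_neg, add_mul, mul_add, mul_assoc,
      neg_neg, sub_eq_add_neg, neg_add]
    simp +decide only [a7_sq, a7_sq', a7_swap, a7_swap', mul_neg, neg_neg, mul_zero, neg_zero,
      add_zero, zero_add]
  · intro h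
    have := LinearMap.congr_fun h ![1, 0, 0, 0, 0, 0, 0]
    simp at this
  · rw [key]
    refine Submodule.smul_mem _ _ (Submodule.subset_span ?_)
    exact ⟨_, _, _, _, _, rfl⟩
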